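/- Let [φ] ∈ (ℂ/ℤ)^n with [φ] = [(1/m)η^(1) + Σ_{k=2}^r β_k η^(k)], where m ≥ 2, η^(k) ∈ ℤ^n, and 1,β_2,…,β_r are ℚ-linearly independent. Then for every j, Res_j([φ]) = {Q ∈ ℕ^n : |Q| ≥ 2, ⟨Q − e_j, η^(1)⟩ ∈ mℤ} ∩ ∩_{k=2}^r Res_j^+(η^(k)); in particular ∩_{k=1}^r Res_j^+(η^(k)) ⊆ Res_j([φ]) ⊆ ∩_{k=2}^r Res_j^+(η^(k)). -/

import Mathlib

open scoped BigOperators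
open Complex

noncomputable section

/-- `φ` (a representative of a class in `(ℂ/ℤ)^n`) is represented by toric
coefficients `α` and toric vectors `θ`, i.e. `[φ] = [∑ k, α k • θ k]`. -/
def IsToricRep {n r : ℕ} (φ : Fin n → ℂ) (α : Fin r → ℂ) (θ : Fin r → Fin n → ℤ) : Prop :=
  ∀ j, ∃ m : ℤ, φ j - ∑ k, α k * (θ k j : ℂ) = (m : ℂ)

/-- `[φ]` has toric degree `r`: `r` is the minimal length of a toric representation. -/
def HasToricDegree {n : ℕ} (φ : Fin n → ℂ) (r : ℕ) : Prop :=
  (∃ (α : Fin r → ℂ) (θ : Fin r → Fin n → ℤ), IsToricRep φ α θ) ∧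
  ∀ s : ℕ, (∃ (α : Fin s → ℂ) (θ : Fin s → Fin n → ℤ), IsToricRep φ α θ) → r ≤ s

/-- `α₁, …, α_r` are rationally independent together with `1`. -/
def RatIndepWithOne {r : ℕ} (α : Fin r → ℂ) : Prop :=
  ∀ (c0 : ℤ) (c : Fin r → ℤ), (c0 : ℂ) + ∑ k, (c k : ℂ) * α k = 0 → c0 = 0 ∧ ∀ k, c k = 0

/-- `α₁, …, α_r` are rationally independent. -/
def RatIndep {r : ℕ} (α : Fin r → ℂ) : Prop :=
  ∀ c : Fin r → ℤ, ∑ k, (c k : ℂ) * α k = 0 → ∀ k, c k = 0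

/-- Additive resonances of `θ ∈ ℤ^n` relative to the `j`-th coordinate. -/
def ResPlus {n : ℕ} (θ : Fin n → ℤ) (j : Fin n) : Set (Fin n → ℕ) :=
  {Q | 2 ≤ ∑ h, Q h ∧ ∑ h, (Q h : ℤ) * θ h = θ j}

/-- Multiplicative resonances of `[φ] ∈ (ℂ/ℤ)^n` relative to the `j`-th coordinate. -/
def ResMod {n : ℕ} (φ : Fin n → ℂ) (j : Fin n) : Set (Fin n → ℕ) :=
  {Q | 2 ≤ ∑ h, Q h ∧ ∃ m : ℤ, (∑ h, (Q h : ℂ) * φ h) - φ j = (m : ℂ)}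

/-- Resonances of `[φ]` with a reduced toric representation: description and the
resulting inclusions. -/
theorem stmt17 (n r : ℕ) (hr : 0 < r) (φ : Fin n → ℂ)
    (β : Fin r → ℂ) (η : Fin r → Fin n → ℤ) (m : ℕ) (hm : 2 ≤ m)
    (hrep : IsToricRep φ β η) (hβ0 : β ⟨0, hr⟩ = 1 / (m : ℂ))
    (hindep : ∀ (c0 : ℤ) (c : Fin r → ℤ), c ⟨0, hr⟩ = 0 →
      (c0 : ℂ) + ∑ k, (c k : ℂ) * β k = 0 → c0 = 0 ∧ ∀ k, c k = 0)
    (j : Fin n) :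
    ResMod φ j =
      ({Q : Fin n → ℕ | 2 ≤ ∑ h, Q h ∧
          ∃ z : ℤ, (∑ h, (Q h : ℤ) * η ⟨0, hr⟩ h) - η ⟨0, hr⟩ j = (m : ℤ) * z} ∩
        ⋂ (k : Fin r) (_ : k ≠ (⟨0, hr⟩ : Fin r)), ResPlus (η k) j) ∧
    (⋂ k : Fin r, ResPlus (η k) j) ⊆ ResMod φ j ∧
    ResMod φ j ⊆ ⋂ (k : Fin r) (_ : k ≠ (⟨0, hr⟩ : Fin r)), ResPlus (η k) j := by
  set i0 : Fin r := ⟨0, hr⟩ with hi0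
  choose M hM' using hrep
  have hM : ∀ h, φ h = (M h : ℂ) + ∑ k, β k * (η k h : ℂ) := fun h => by
    have := hM' h; linear_combination this
  have hmZ : (m : ℤ) ≠ 0 := by omega
  have hmC : (m : ℂ) ≠ 0 := Nat.cast_ne_zero.mpr (by omega)
  have key : ∀ Q : Fin n → ℕ,
      (∃ w : ℤ, (∑ h, (Q h : ℂ) * φ h) - φ j = (w : ℂ)) ↔
      ((∃ z : ℤ, (∑ h, (Q h : ℤ) * η i0 h) - η i0 j = (m : ℤ) * z) ∧
        ∀ k, k ≠ i0 → (∑ h, (Q h : ℤ) * η k h) = η k j) := by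
    intro Q
    set c : Fin r → ℤ := fun k => (∑ h, (Q h : ℤ) * η k h) - η k j with hc
    set T : ℤ := (∑ h, (Q h : ℤ) * M h) - M j with hT
    have hsum : (∑ h, (Q h : ℂ) * φ h) - φ j = (∑ k, β k * (c k : ℂ)) + (T : ℂ) := by
      simp only [hM, mul_add, Finset.sum_add_distrib, Finset.mul_sum, hc, hT]
      push_cast
      simp only [mul_sub, Finset.sum_sub_distrib, Finset.mul_sum]
      rw [Finset.sum_comm (f := fun h k => (Q h : ℂ) * (β k * (η k h : ℂ)))]
      rw [Finset.sum_congr rfl fun x _ => Finset.sum_congr rfl fun y _ =>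
        (by ring : (Q y : ℂ) * (β x * (η x y : ℂ)) = β x * ((Q y : ℂ) * (η x y : ℂ)))]
      ring
    constructor
    · rintro ⟨w, hw⟩
      have hw' : ∑ k, β k * (c k : ℂ) = ((w - T : ℤ) : ℂ) := by
        push_cast; linear_combination hw - hsum
      set d : Fin r → ℤ := fun k => if k = i0 then 0 else m * c k with hd
      have hterm : ∀ k, (d k : ℂ) * β k
          = ((m : ℤ) * c k : ℂ) * β k
            - (if k = i0 then ((m : ℤ) * c i0 : ℂ) * β i0 else 0) := by
        intro k
        by_cases h : k = i0 <;> simp [hd, h]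
      have hdsum : ∑ k, (d k : ℂ) * β k
          = (∑ k, ((m : ℤ) * c k : ℂ) * β k) - ((m : ℤ) * c i0 : ℂ) * β i0 := by
        simp only [hterm, Finset.sum_sub_distrib,
          Finset.sum_ite_eq' Finset.univ i0, Finset.mem_univ, if_true]
      have h0 : ((c i0 - m * (w - T) : ℤ) : ℂ) + ∑ k, (d k : ℂ) * β k = 0 := by
        rw [hdsum]
        have hms : ∑ k, ((m : ℤ) * c k : ℂ) * β k = (m : ℂ) * ∑ k, β k * (c k : ℂ) := by
          rw [Finset.mul_sum]; apply Finset.sum_congr rfl; intros; push_cast; ring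
        rw [hms, hw', hβ0]
        push_cast
        field_simp
        ring
      have hres := hindep (c i0 - m * (w - T)) d (by simp [hd]) h0
      constructor
      · refine ⟨w - T, ?_⟩
        have h1 := hres.1
        simp only [hc] at h1
        linarith
      · intro k hk
        have h1 := hres.2 k
        rw [hd] at h1
        simp only [if_neg hk] at h1
        have h2 : c k = 0 := (mul_eq_zero.mp h1).resolve_left hmZ
        simpa [hc, sub_eq_zero] using h2
    · rintro ⟨⟨z, hz⟩, hk0⟩
      refine ⟨z + T, ?_⟩
      rw [hsum]
      have hsum2 : ∑ k, β k * (c k : ℂ) = β i0 * (c i0 : ℂ) := by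
        apply Finset.sum_eq_single i0
        · intro k _ hk
          have : c k = 0 := by simp [hc, sub_eq_zero, hk0 k hk]
          simp [this]
        · simp
      rw [hsum2, hβ0]
      have hci0 : ((c i0 : ℤ) : ℂ) = (m : ℂ) * (z : ℂ) := by
        have h3 : c i0 = (m : ℤ) * z := by simp only [hc]; exact hz
        rw [h3]; push_cast; ring
      rw [hci0]
      push_cast
      field_simp
  refine ⟨?_, ?_, ?_⟩
  · ext Q
    simp only [ResMod, ResPlus, Set.mem_setOf_eq, Set.mem_inter_iff, Set.mem_iInter,
      Set.mem_setOf_eq, key Q]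
    constructor
    · rintro ⟨h2, hz, hk⟩
      exact ⟨⟨h2, hz⟩, fun k hk' => ⟨h2, hk k hk'⟩⟩
    · rintro ⟨⟨h2, hz⟩, hk⟩
      exact ⟨h2, hz, fun k hk' => (hk k hk').2⟩
  · intro Q hQ
    simp only [Set.mem_iInter] at hQ
    have h2 := (hQ i0).1
    refine ⟨h2, (key Q).mpr ⟨⟨0, by rw [mul_zero, sub_eq_zero]; exact (hQ i0).2⟩,
      fun k _ => (hQ k).2⟩⟩
  · intro Q hQ
    simp only [Set.mem_iInter]
    intro k hk
    exact ⟨hQ.1, (((key Q).mp hQ.2).2) k hk⟩
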